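/- arXiv:2105.13595 — 2 statements merged into one kernel-verified Lean document; each statement's English description precedes it below -/
import Mathlib

section
/- For every i ≥ 2, the string σ^i(0) has 00 as a prefix, and for every j with 1 ≤ j < i, the string 0·1^j·0 (a 0, followed by j consecutive 1s, followed by a 0) occurs as a substring of σ^i(0). -/
/-- The morphism σ on {0,1} (0 ↦ false, 1 ↦ true) with σ(0) = 001 and σ(1) = 1,
given by its images on symbols. -/
def sigmaRule : Bool → List Bool
  | false => [false, false, true]
  | true => [true]

/-- The homomorphic extension of σ to strings. -/
def sigmaM (w : List Bool) : List Bool := w.flatMap sigmaRule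

lemma sigmaM_append (a b : List Bool) : sigmaM (a ++ b) = sigmaM a ++ sigmaM b := by
  simp [sigmaM]

lemma sigma_iter_append (i : ℕ) (a b : List Bool) :
    sigmaM^[i] (a ++ b) = sigmaM^[i] a ++ sigmaM^[i] b := by
  induction i generalizing a b with
  | zero => simp
  | succ n ih => rw [Function.iterate_succ_apply, Function.iterate_succ_apply,
      Function.iterate_succ_apply, sigmaM_append, ih]

lemma sigma_iter_true (i : ℕ) : sigmaM^[i] [true] = [true] := by
  induction i with
  | zero => rfl
  | succ n ih => rw [Function.iterate_succ_apply]; simpa [sigmaM, sigmaRule] using ih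

lemma sigma_step (i : ℕ) :
    sigmaM^[i+1] [false] = sigmaM^[i] [false] ++ sigmaM^[i] [false] ++ [true] := by
  rw [Function.iterate_succ_apply]
  show sigmaM^[i] ([false] ++ [false] ++ [true]) = _
  rw [sigma_iter_append, sigma_iter_append, sigma_iter_true]

lemma sigma_prefix (i : ℕ) : [false] <+: sigmaM^[i] [false] := by
  induction i with
  | zero => simp
  | succ n ih =>
      rw [sigma_step]
      exact ih.trans ((List.prefix_append _ _).trans (List.prefix_append _ _))

lemma sigma_suffix (i : ℕ) :
    ([false] ++ List.replicate i true) <:+ sigmaM^[i] [false] := by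
  induction i with
  | zero => simp
  | succ n ih =>
      rw [sigma_step]
      obtain ⟨u, hu⟩ := ih
      refine ⟨sigmaM^[n] [false] ++ u, ?_⟩
      rw [List.replicate_succ']
      simp [← hu]

/-- For every i ≥ 2, σ^i(0) has 00 as a prefix, and for every j with 1 ≤ j < i,
the string 0·1^j·0 occurs as a substring of σ^i(0). -/
theorem sigma_iter_prefix_and_runs (i : ℕ) (hi : 2 ≤ i) :
    [false, false] <+: sigmaM^[i] [false] ∧
    ∀ j, 1 ≤ j → j < i →
      ([false] ++ List.replicate j true ++ [false]) <:+: sigmaM^[i] [false] := by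
  induction i, hi using Nat.le_induction with
  | base =>
      constructor
      · decide
      · intro j h1 h2
        interval_cases j
        decide
  | succ n hn ih =>
      obtain ⟨ihp, ihi⟩ := ih
      constructor
      · rw [sigma_step]
        exact ihp.trans ((List.prefix_append _ _).trans (List.prefix_append _ _))
      · intro j h1 h2
        rcases lt_or_eq_of_le (Nat.lt_succ_iff.mp h2) with h | h
        · refine (ihi j h1 h).trans ?_
          rw [sigma_step]
          exact ((List.prefix_append _ _).trans (List.prefix_append _ _)).isInfix
        · subst h
          rw [sigma_step]
          obtain ⟨u, hu⟩ := sigma_suffix j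
          obtain ⟨v, hv⟩ := sigma_prefix j
          refine ⟨u, v ++ [true], ?_⟩
          nth_rewrite 2 [← hv]
          rw [← hu]
          simp
end

section
/- Let F_1 = b, F_2 = a, F_{k+2} = F_{k+1}·F_k be the Fibonacci strings over {a,b}, and f_k = |F_k| the Fibonacci numbers. Then for every k ≥ 6, F_k = F_k[f_{k-2}+1, f_k-2] · c_1 c_2 · F_k[f_{k-2}+1, 2f_{k-2}], where c_1 c_2 = ba if k is odd and c_1 c_2 = ab if k is even. (Here x[i,j] denotes the substring of x from position i to position j, 1-indexed.) -/
/-- 1-indexed substring `x[i,j]` of a string (empty if `j < i`). -/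
def substr {α : Type} (w : List α) (i j : ℕ) : List α := (w.take j).drop (i - 1)

/-- The Fibonacci strings over {a, b}, encoded with a = `false`, b = `true`:
F₁ = b, F₂ = a, F_{k+2} = F_{k+1}·F_k. -/
def FibStr : ℕ → List Bool
  | 0 => []
  | 1 => [true]
  | 2 => [false]
  | k + 3 => FibStr (k + 2) ++ FibStr (k + 1)

/-- The last two letters of `FibStr m` (for `m ≥ 3`). -/
def ee (m : ℕ) : List Bool := if m % 2 = 0 then [true, false] else [false, true]

lemma ee_add_two (m : ℕ) : ee (m + 2) = ee m := by
  simp [ee, Nat.add_mod]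

lemma fib_succ3 (n : ℕ) : FibStr (n + 3) = FibStr (n + 2) ++ FibStr (n + 1) := rfl

lemma swapLemma (n : ℕ) : ∃ u : List Bool,
    FibStr (n + 4) = u ++ ee (n + 4) ∧
    FibStr (n + 2) ++ FibStr (n + 3) = u ++ ee (n + 5) := by
  induction n with
  | zero => exact ⟨[false], by decide, by decide⟩
  | succ n ih =>
    obtain ⟨u, h1, h2⟩ := ih
    refine ⟨FibStr (n + 3) ++ u, ?_, ?_⟩
    · show FibStr (n + 5) = (FibStr (n + 3) ++ u) ++ ee (n + 5)
      have e5 : FibStr (n + 5) = FibStr (n + 3) ++ (FibStr (n + 2) ++ FibStr (n + 3)) := by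
        rw [show n+5 = (n+2)+3 from rfl, fib_succ3 (n+2), show n+4 = (n+1)+3 from rfl,
          fib_succ3 (n+1), List.append_assoc]
      rw [e5, h2, List.append_assoc]
    · show FibStr (n + 3) ++ FibStr (n + 4) = (FibStr (n + 3) ++ u) ++ ee (n + 6)
      rw [h1, ee_add_two (n + 4), List.append_assoc]
/-- For every k ≥ 6,
F_k = F_k[f_{k-2}+1, f_k-2] · c₁c₂ · F_k[f_{k-2}+1, 2f_{k-2}],
where f_j = |F_j| and c₁c₂ = ba if k is odd, c₁c₂ = ab if k is even. -/
theorem fibonacci_string_self_reference (k : ℕ) (hk : 6 ≤ k) :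
    FibStr k =
      substr (FibStr k) ((FibStr (k - 2)).length + 1) ((FibStr k).length - 2) ++
      (if k % 2 = 1 then [true, false] else [false, true]) ++
      substr (FibStr k) ((FibStr (k - 2)).length + 1)
        (2 * (FibStr (k - 2)).length) := by
  obtain ⟨m, rfl⟩ : ∃ m, k = m + 6 := ⟨k - 6, by omega⟩
  obtain ⟨u, h1, h2⟩ := swapLemma (m + 1)
  have h1 : FibStr (m + 5) = u ++ ee (m + 5) := h1
  have h2 : FibStr (m + 3) ++ FibStr (m + 4) = u ++ ee (m + 6) := h2
  -- h1 : FibStr (m+5) = u ++ ee (m+5), h2 : FibStr (m+3) ++ FibStr (m+4) = u ++ ee (m+6)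
  have hk2 : m + 6 - 2 = m + 4 := by omega
  rw [hk2]
  have hF : FibStr (m + 6) = FibStr (m + 4) ++ (FibStr (m + 3) ++ FibStr (m + 4)) := by
    rw [show m+6 = (m+3)+3 from rfl, fib_succ3 (m+3), show m+5 = (m+2)+3 from rfl,
      fib_succ3 (m+2), List.append_assoc]
  have hc : (if (m + 6) % 2 = 1 then [true, false] else [false, true] : List Bool)
      = ee (m + 5) := by
    rcases Nat.mod_two_eq_zero_or_one m with h | h <;>
      simp [ee, Nat.add_mod, h]
  have hee : (ee (m + 6)).length = 2 := by
    unfold ee; split <;> rfl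
  -- Part P : substr ... = u
  have hP : substr (FibStr (m + 6)) ((FibStr (m + 4)).length + 1)
      ((FibStr (m + 6)).length - 2) = u := by
    have hF' : FibStr (m + 6) = (FibStr (m + 4) ++ u) ++ ee (m + 6) := by
      rw [hF, h2, List.append_assoc]
    have hlen : (FibStr (m + 6)).length - 2 = (FibStr (m + 4) ++ u).length := by
      rw [hF']; simp [hee]; omega
    rw [substr, hlen, hF', List.take_left, Nat.add_sub_cancel, List.drop_left]
  -- Part S : substr ... = FibStr (m+4)
  have hS : substr (FibStr (m + 6)) ((FibStr (m + 4)).length + 1)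
      (2 * (FibStr (m + 4)).length) = FibStr (m + 4) := by
    rw [substr, Nat.add_sub_cancel, two_mul, hF, List.take_length_add_append, List.drop_left]
    -- goal: take (len F_{m+4}) (F_{m+3} ++ F_{m+4}) = F_{m+4}
    have h4 : FibStr (m + 4) = FibStr (m + 3) ++ FibStr (m + 2) := fib_succ3 (m + 1)
    have h3 : FibStr (m + 3) = FibStr (m + 2) ++ FibStr (m + 1) := fib_succ3 m
    rw [show (FibStr (m+4)).length = (FibStr (m+3)).length + (FibStr (m+2)).length by
        rw [h4]; simp, List.take_length_add_append]
    rw [h4, List.take_append_of_le_length (by rw [h3]; simp), h3, List.take_left]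
  rw [hP, hc, hS, show FibStr (m + 6) = FibStr (m + 5) ++ FibStr (m + 4) from
    fib_succ3 (m + 3), h1, List.append_assoc]
end
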